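/- arXiv:2605.06755 — 5 statements merged into one kernel-verified Lean document; each statement's English description precedes it below -/
import Mathlib

section
/- Let A be a real d×d matrix, ρ ≥ 1 with ‖A‖ ≤ ρ, and let η ≥ 0, M₃ ≥ 0, G ≥ 0. Suppose (e_n) is a sequence of vectors in ℝ^d with ‖e_n‖ ≤ (M₃/2)·n²·η²·G² for all n ≥ 0, and define ξ₀ = 0 and ξ_{n+1} = A·ξ_n − η·e_n. Then for every K ≥ 1, ‖ξ_K‖ ≤ (K(K−1)(2K−1)/12) · η³ · M₃ · G² · ρ^{K−1}. -/
/-- Operator (spectral) norm of a real matrix, induced by the Euclidean norm. -/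
noncomputable def matOpNorm {d : ℕ} (A : Matrix (Fin d) (Fin d) ℝ) : ℝ :=
  ‖(Matrix.toEuclideanCLM (𝕜 := ℝ) (n := Fin d) A :
      EuclideanSpace ℝ (Fin d) →L[ℝ] EuclideanSpace ℝ (Fin d))‖

/-- A matrix acting on a Euclidean vector by matrix-vector multiplication. -/
noncomputable def mulVecE {d : ℕ} (A : Matrix (Fin d) (Fin d) ℝ)
    (v : EuclideanSpace ℝ (Fin d)) : EuclideanSpace ℝ (Fin d) :=
  Matrix.toEuclideanCLM (𝕜 := ℝ) (n := Fin d) A v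

lemma mulVecE_norm_le {d : ℕ} (A : Matrix (Fin d) (Fin d) ℝ) (ρ : ℝ)
    (hA : matOpNorm A ≤ ρ) (v : EuclideanSpace ℝ (Fin d)) :
    ‖mulVecE A v‖ ≤ ρ * ‖v‖ := by
  have h := (Matrix.toEuclideanCLM (𝕜 := ℝ) (n := Fin d) A).le_opNorm v
  calc ‖mulVecE A v‖ ≤ matOpNorm A * ‖v‖ := h
    _ ≤ ρ * ‖v‖ := by
        exact mul_le_mul_of_nonneg_right hA (norm_nonneg v)

/-- accumulation bound for the non-quadratic error recursion. -/
theorem stmt7 {d : ℕ} (A : Matrix (Fin d) (Fin d) ℝ) (ρ : ℝ) (hρ : 1 ≤ ρ)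
    (hA : matOpNorm A ≤ ρ) (η M₃ G : ℝ) (hη : 0 ≤ η) (hM₃ : 0 ≤ M₃) (hG : 0 ≤ G)
    (e : ℕ → EuclideanSpace ℝ (Fin d))
    (he : ∀ n : ℕ, ‖e n‖ ≤ M₃ / 2 * (n : ℝ) ^ 2 * η ^ 2 * G ^ 2)
    (ξ : ℕ → EuclideanSpace ℝ (Fin d)) (hξ0 : ξ 0 = 0)
    (hξ : ∀ n, ξ (n + 1) = mulVecE A (ξ n) - η • e n) :
    ∀ K : ℕ, 1 ≤ K →
      ‖ξ K‖ ≤ (K : ℝ) * ((K : ℝ) - 1) * (2 * (K : ℝ) - 1) / 12 *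
        η ^ 3 * M₃ * G ^ 2 * ρ ^ (K - 1) := by
  intro K hK
  induction K, hK using Nat.le_induction with
  | base =>
    have h0 : ‖e 0‖ ≤ 0 := by
      have := he 0; simpa using this
    have he0 : e 0 = 0 := norm_le_zero_iff.mp h0
    rw [hξ 0, hξ0, he0]
    simp [mulVecE]
  | succ K hK ih =>
    have hrec := hξ K
    have hstep : ‖ξ (K + 1)‖ ≤ ρ * ‖ξ K‖ + η * ‖e K‖ := by
      rw [hrec]
      calc ‖mulVecE A (ξ K) - η • e K‖ ≤ ‖mulVecE A (ξ K)‖ + ‖η • e K‖ :=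
            norm_sub_le _ _
        _ ≤ ρ * ‖ξ K‖ + η * ‖e K‖ := by
            have := mulVecE_norm_le A ρ hA (ξ K)
            have h2 : ‖η • e K‖ = η * ‖e K‖ := by
              rw [norm_smul, Real.norm_eq_abs, abs_of_nonneg hη]
            linarith
    have heK := he K
    have hρ0 : (0:ℝ) ≤ ρ := le_trans zero_le_one hρ
    have hpow : ρ ^ (K - 1) * ρ = ρ ^ K := by
      rw [← pow_succ]
      congr 1
      omega
    have hpow1 : (1:ℝ) ≤ ρ ^ K := one_le_pow₀ hρ
    have hc : (0:ℝ) ≤ η ^ 3 * M₃ * G ^ 2 := by positivity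
    have h1 : ρ * ‖ξ K‖ ≤
        (K : ℝ) * ((K : ℝ) - 1) * (2 * (K : ℝ) - 1) / 12 * (η ^ 3 * M₃ * G ^ 2) * ρ ^ K := by
      calc ρ * ‖ξ K‖
          ≤ ρ * ((K : ℝ) * ((K : ℝ) - 1) * (2 * (K : ℝ) - 1) / 12 *
              η ^ 3 * M₃ * G ^ 2 * ρ ^ (K - 1)) := mul_le_mul_of_nonneg_left ih hρ0
        _ = (K : ℝ) * ((K : ℝ) - 1) * (2 * (K : ℝ) - 1) / 12 * (η ^ 3 * M₃ * G ^ 2) *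
              (ρ ^ (K - 1) * ρ) := by ring
        _ = _ := by rw [hpow]
    have h2 : η * ‖e K‖ ≤ (K : ℝ) ^ 2 / 2 * (η ^ 3 * M₃ * G ^ 2) * ρ ^ K := by
      calc η * ‖e K‖ ≤ η * (M₃ / 2 * (K : ℝ) ^ 2 * η ^ 2 * G ^ 2) :=
            mul_le_mul_of_nonneg_left heK hη
        _ = (K : ℝ) ^ 2 / 2 * (η ^ 3 * M₃ * G ^ 2) * 1 := by ring
        _ ≤ (K : ℝ) ^ 2 / 2 * (η ^ 3 * M₃ * G ^ 2) * ρ ^ K := by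
            have h3 : (0:ℝ) ≤ (K : ℝ) ^ 2 / 2 * (η ^ 3 * M₃ * G ^ 2) := by positivity
            exact mul_le_mul_of_nonneg_left hpow1 h3
    have hsub : K + 1 - 1 = K := by omega
    rw [hsub]
    push_cast
    calc ‖ξ (K + 1)‖ ≤ ρ * ‖ξ K‖ + η * ‖e K‖ := hstep
      _ ≤ (K : ℝ) * ((K : ℝ) - 1) * (2 * (K : ℝ) - 1) / 12 * (η ^ 3 * M₃ * G ^ 2) * ρ ^ K
          + (K : ℝ) ^ 2 / 2 * (η ^ 3 * M₃ * G ^ 2) * ρ ^ K := add_le_add h1 h2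
      _ = ((K : ℝ) + 1) * ((K : ℝ) + 1 - 1) * (2 * ((K : ℝ) + 1) - 1) / 12 *
            η ^ 3 * M₃ * G ^ 2 * ρ ^ K := by ring
end

section
/- Let H₀ be a real d×d matrix, g₀ ∈ ℝ^d, η ≥ 0, and K ≥ 2. Set A = I − η·H₀, D = I − η·diag(H₀), and ρ = max(1, ‖A‖). Then ‖η·∑_{n=0}^{K−1} (A^n − D^n)·g₀‖ ≤ (K(K−1)/2) · η² · ‖H₀^off‖ · ‖g₀‖ · ρ^{K−2}, where H₀^off = H₀ − diag(H₀) is the off-diagonal part of H₀. -/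
open scoped Matrix.Norms.L2Operator

private lemma euclid_comp_le {d : ℕ} (y : EuclideanSpace ℝ (Fin d)) (i : Fin d) :
    |y i| ≤ ‖y‖ := by
  rw [EuclideanSpace.norm_eq, ← Real.sqrt_sq_eq_abs]
  apply Real.sqrt_le_sqrt
  simpa using Finset.single_le_sum (f := fun j => ‖y j‖^2)
    (fun j _ => sq_nonneg _) (Finset.mem_univ i)

private lemma diag_entry_le {d : ℕ} (M : Matrix (Fin d) (Fin d) ℝ) (i : Fin d) :
    |M i i| ≤ ‖M‖ := by
  have h1 : (Matrix.toEuclideanCLM (𝕜 := ℝ) M (EuclideanSpace.single i 1)) i = M i i := by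
    have := congrFun (Matrix.ofLp_toEuclideanCLM M (EuclideanSpace.single i 1)) i
    simp [Matrix.toLin'_apply] at this
    simp [Matrix.ofLp_toEuclideanCLM]
  calc |M i i| ≤ ‖Matrix.toEuclideanCLM (𝕜 := ℝ) M (EuclideanSpace.single i 1)‖ := by
        rw [← h1]; exact euclid_comp_le _ _
    _ ≤ ‖M‖ * ‖EuclideanSpace.single i (1:ℝ)‖ := ContinuousLinearMap.le_opNorm _ _
    _ = ‖M‖ := by rw [EuclideanSpace.norm_single]; simp

private lemma diag_norm_le {d : ℕ} (v : Fin d → ℝ) (C : ℝ) (hC : 0 ≤ C)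
    (h : ∀ i, |v i| ≤ C) : ‖Matrix.diagonal v‖ ≤ C := by
  rw [Matrix.cstar_norm_def]
  apply ContinuousLinearMap.opNorm_le_bound _ hC
  intro x
  have hx : ∀ i, (Matrix.toEuclideanCLM (𝕜 := ℝ) (Matrix.diagonal v) x) i = v i * x i := by
    intro i
    have := congrFun (Matrix.ofLp_toEuclideanCLM (Matrix.diagonal v) x) i
    simpa [Matrix.toLin'_apply, Matrix.mulVec_diagonal] using this
  rw [EuclideanSpace.norm_eq, EuclideanSpace.norm_eq,
    ← Real.sqrt_sq hC, ← Real.sqrt_mul (by positivity)]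
  apply Real.sqrt_le_sqrt
  rw [Finset.mul_sum]
  apply Finset.sum_le_sum
  intro i _
  rw [hx i]
  have h2 : ‖v i * x i‖ ≤ C * ‖x i‖ := by
    rw [norm_mul]
    exact mul_le_mul_of_nonneg_right (by simpa [Real.norm_eq_abs] using h i) (norm_nonneg _)
  calc ‖v i * x i‖^2 ≤ (C * ‖x i‖)^2 := pow_le_pow_left₀ (norm_nonneg _) h2 2
    _ = C^2 * ‖x i‖^2 := by ring

private lemma pow_norm_le {d : ℕ} (M : Matrix (Fin d) (Fin d) ℝ) (ρ : ℝ)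
    (h1 : 1 ≤ ρ) (hM : ‖M‖ ≤ ρ) (n : ℕ) : ‖M ^ n‖ ≤ ρ ^ n := by
  cases n with
  | zero =>
    simp only [pow_zero]
    rw [Matrix.cstar_norm_def, map_one]
    exact ContinuousLinearMap.norm_id_le
  | succ m =>
    calc ‖M ^ (m+1)‖ ≤ ‖M‖ ^ (m+1) := norm_pow_le' M (Nat.succ_pos m)
      _ ≤ ρ ^ (m+1) := pow_le_pow_left₀ (norm_nonneg _) hM _

private lemma pow_diff_le {d : ℕ} (A D : Matrix (Fin d) (Fin d) ℝ) (ρ : ℝ)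
    (h1 : 1 ≤ ρ) (hA : ‖A‖ ≤ ρ) (hD : ‖D‖ ≤ ρ) (n : ℕ) :
    ‖A ^ n - D ^ n‖ ≤ n * ‖A - D‖ * ρ ^ (n - 1) := by
  have hρ0 : (0:ℝ) ≤ ρ := le_trans zero_le_one h1
  induction n with
  | zero => simp
  | succ n ih =>
    have key : A ^ (n+1) - D ^ (n+1) = A * (A ^ n - D ^ n) + (A - D) * D ^ n := by
      rw [pow_succ', pow_succ']; noncomm_ring
    have hstep : ρ * ((n:ℝ) * ‖A - D‖ * ρ ^ (n - 1)) ≤ (n:ℝ) * ‖A - D‖ * ρ ^ n := by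
      cases n with
      | zero => simp
      | succ m =>
        have hmm : ρ ^ (m + 1) = ρ * ρ ^ m := pow_succ' ρ m
        simp only [Nat.add_sub_cancel, hmm]
        exact le_of_eq (by ring)
    calc ‖A ^ (n+1) - D ^ (n+1)‖
        ≤ ‖A * (A ^ n - D ^ n)‖ + ‖(A - D) * D ^ n‖ := by rw [key]; exact norm_add_le _ _
      _ ≤ ‖A‖ * ‖A ^ n - D ^ n‖ + ‖A - D‖ * ‖D ^ n‖ :=
          add_le_add (norm_mul_le _ _) (norm_mul_le _ _)
      _ ≤ ρ * ((n:ℝ) * ‖A - D‖ * ρ ^ (n - 1)) + ‖A - D‖ * ρ ^ n :=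
          add_le_add
            (mul_le_mul hA ih (norm_nonneg _) hρ0)
            (mul_le_mul_of_nonneg_left (pow_norm_le D ρ h1 hD n) (norm_nonneg _))
      _ ≤ (n:ℝ) * ‖A - D‖ * ρ ^ n + ‖A - D‖ * ρ ^ n := by linarith
      _ = (↑(n+1):ℝ) * ‖A - D‖ * ρ ^ (n + 1 - 1) := by
          simp only [Nat.add_sub_cancel]; push_cast; ring

private lemma sum_range_cast (m : ℕ) :
    (∑ n ∈ Finset.range m, (n:ℝ)) = (m:ℝ) * ((m:ℝ) - 1) / 2 := by
  induction m with
  | zero => simp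
  | succ k ih => rw [Finset.sum_range_succ, ih]; push_cast; ring

/-- diagonalization error for the accumulated displacement. -/
theorem stmt8 {d : ℕ} (H₀ : Matrix (Fin d) (Fin d) ℝ) (g₀ : EuclideanSpace ℝ (Fin d))
    (η : ℝ) (hη : 0 ≤ η) (K : ℕ) (hK : 2 ≤ K)
    (A D : Matrix (Fin d) (Fin d) ℝ)
    (hA : A = 1 - η • H₀)
    (hD : D = 1 - η • Matrix.diagonal (fun i => H₀ i i))
    (ρ : ℝ) (hρ : ρ = max 1 (matOpNorm A)) :
    ‖η • ∑ n ∈ Finset.range K, mulVecE (A ^ n - D ^ n) g₀‖ ≤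
      (K : ℝ) * ((K : ℝ) - 1) / 2 * η ^ 2 *
        matOpNorm (H₀ - Matrix.diagonal (fun i => H₀ i i)) * ‖g₀‖ * ρ ^ (K - 2) := by
  have hmat : ∀ M : Matrix (Fin d) (Fin d) ℝ, matOpNorm M = ‖M‖ := fun M => rfl
  have hmv : ∀ (M : Matrix (Fin d) (Fin d) ℝ) (v : EuclideanSpace ℝ (Fin d)),
      ‖mulVecE M v‖ ≤ ‖M‖ * ‖v‖ := fun M v => by
    rw [Matrix.cstar_norm_def]; exact ContinuousLinearMap.le_opNorm _ _
  simp only [hmat] at hρ ⊢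
  set off := H₀ - Matrix.diagonal (fun i => H₀ i i) with hoff
  have h1ρ : 1 ≤ ρ := hρ ▸ le_max_left _ _
  have hρ0 : (0:ℝ) ≤ ρ := le_trans zero_le_one h1ρ
  have hAρ : ‖A‖ ≤ ρ := hρ ▸ le_max_right _ _
  have hDdiag : D = Matrix.diagonal (fun i => A i i) := by
    subst hA hD
    ext i j
    by_cases h : i = j <;> simp [Matrix.diagonal_apply, Matrix.one_apply, h]
  have hDρ : ‖D‖ ≤ ρ := by
    rw [hDdiag]
    exact diag_norm_le _ _ hρ0 (fun i => le_trans (diag_entry_le A i) hAρ)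
  have hAD : ‖A - D‖ = η * ‖off‖ := by
    have hADeq : A - D = (-η) • off := by
      rw [hA, hD, hoff, neg_smul, smul_sub]
      abel
    rw [hADeq, norm_smul, Real.norm_eq_abs, abs_neg, abs_of_nonneg hη]
  have hbound : ∀ n ∈ Finset.range K,
      ‖mulVecE (A ^ n - D ^ n) g₀‖ ≤ (n:ℝ) * (η * ‖off‖) * ρ ^ (K - 2) * ‖g₀‖ := by
    intro n hn
    rw [Finset.mem_range] at hn
    have h1 : ‖A ^ n - D ^ n‖ ≤ (n:ℝ) * (η * ‖off‖) * ρ ^ (n - 1) := by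
      rw [← hAD]; exact pow_diff_le A D ρ h1ρ hAρ hDρ n
    have h2 : ρ ^ (n - 1) ≤ ρ ^ (K - 2) := pow_le_pow_right₀ h1ρ (by omega)
    calc ‖mulVecE (A ^ n - D ^ n) g₀‖ ≤ ‖A ^ n - D ^ n‖ * ‖g₀‖ := hmv _ _
      _ ≤ ((n:ℝ) * (η * ‖off‖) * ρ ^ (K - 2)) * ‖g₀‖ := by
          apply mul_le_mul_of_nonneg_right _ (norm_nonneg _)
          calc ‖A ^ n - D ^ n‖ ≤ (n:ℝ) * (η * ‖off‖) * ρ ^ (n - 1) := h1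
            _ ≤ (n:ℝ) * (η * ‖off‖) * ρ ^ (K - 2) := by
                apply mul_le_mul_of_nonneg_left h2
                positivity
  have hsum : (∑ n ∈ Finset.range K, (n:ℝ)) = (K:ℝ) * ((K:ℝ) - 1) / 2 :=
    sum_range_cast K
  calc ‖η • ∑ n ∈ Finset.range K, mulVecE (A ^ n - D ^ n) g₀‖
      = η * ‖∑ n ∈ Finset.range K, mulVecE (A ^ n - D ^ n) g₀‖ := by
        rw [norm_smul, Real.norm_eq_abs, abs_of_nonneg hη]
    _ ≤ η * ∑ n ∈ Finset.range K, ‖mulVecE (A ^ n - D ^ n) g₀‖ :=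
        mul_le_mul_of_nonneg_left (norm_sum_le _ _) hη
    _ ≤ η * ∑ n ∈ Finset.range K, (n:ℝ) * (η * ‖off‖) * ρ ^ (K - 2) * ‖g₀‖ :=
        mul_le_mul_of_nonneg_left (Finset.sum_le_sum hbound) hη
    _ = (∑ n ∈ Finset.range K, (n:ℝ)) * (η ^ 2 * ‖off‖ * ρ ^ (K - 2) * ‖g₀‖) := by
        rw [Finset.mul_sum, Finset.sum_mul]
        exact Finset.sum_congr rfl fun i _ => by ring
    _ = (K : ℝ) * ((K : ℝ) - 1) / 2 * η ^ 2 * ‖off‖ * ‖g₀‖ * ρ ^ (K - 2) := by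
        rw [hsum]; ring
end

section
/- Let K ≥ 2, η ≥ 0, G ≥ 0, M₃ ≥ 0, and let L : ℝ^d → ℝ be three times continuously differentiable on an open set U that is star-shaped with respect to θ₀, with the norm of the third derivative of L bounded by M₃ on U. Set g₀ = ∇L(θ₀), H₀ = ∇²L(θ₀), D = I − η·diag(H₀), and ρ = max(1, ‖I − η·H₀‖). Define the true gradient-descent trajectory θ_{n+1}^{true} = θ_n^{true} − η·∇L(θ_n^{true}) with θ_0^{true} = θ₀, and the quadratic-model trajectory θ_{n+1}^{quad} = θ_n^{quad} − η·(I − η·H₀)^n g₀ with θ_0^{quad} = θ₀, and suppose θ_n^{true} ∈ U and θ_n^{quad} ∈ U for all 0 ≤ n ≤ K. Define the diagonal-surrogate point θ_K^{diag} = θ₀ − η·∑_{n=0}^{K−1} D^n g₀. If sup_{0 ≤ n < K} ‖∇L(θ_n^{true})‖ ≤ G, then ‖θ_K^{diag} − θ_K^{true}‖ ≤ (K(K−1)/2)·η²·‖H₀^off‖·‖g₀‖·ρ^{K−2} + (K(K−1)(2K−1)/12)·η³·M₃·G²·ρ^{K−1}. -/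
open Set


lemma sum_range_id_real (K : ℕ) : ∑ n ∈ Finset.range K, (n:ℝ) = K*(K-1)/2 := by
  induction K with
  | zero => simp
  | succ m ih => rw [Finset.sum_range_succ, ih]; push_cast; ring

lemma sum_range_sq_real (K : ℕ) : ∑ n ∈ Finset.range K, (n:ℝ)^2 = K*(K-1)*(2*K-1)/6 := by
  induction K with
  | zero => simp
  | succ m ih => rw [Finset.sum_range_succ, ih]; push_cast; ring

lemma pow_norm_le_s9 {R : Type*} [NormedRing R] (b : R) (ρ : ℝ) (hb : ‖b‖ ≤ ρ)
    (h1 : ‖(1:R)‖ ≤ 1) (hρ : 1 ≤ ρ) : ∀ n : ℕ, ‖b^n‖ ≤ ρ^n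
  | 0 => by simpa using h1
  | (n+1) => by
    have h0 : (0:ℝ) ≤ ρ := le_trans zero_le_one hρ
    calc ‖b^(n+1)‖ = ‖b * b^n‖ := by rw [pow_succ']
      _ ≤ ‖b‖ * ‖b^n‖ := norm_mul_le _ _
      _ ≤ ρ * ρ^n := mul_le_mul hb (pow_norm_le_s9 b ρ hb h1 hρ n) (norm_nonneg _) h0
      _ = ρ^(n+1) := (pow_succ' ρ n).symm

lemma pow_sub_pow_norm_le {R : Type*} [NormedRing R] (a b : R) (ρ : ℝ)
    (ha : ‖a‖ ≤ ρ) (hb : ‖b‖ ≤ ρ) (h1 : ‖(1:R)‖ ≤ 1) (hρ : 1 ≤ ρ) :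
    ∀ n : ℕ, ‖a^n - b^n‖ ≤ n * ‖a - b‖ * ρ^(n-1)
  | 0 => by simp
  | 1 => by simp
  | (n+2) => by
    have h0 : (0:ℝ) ≤ ρ := le_trans zero_le_one hρ
    set m := n + 1
    have key : a^(m+1) - b^(m+1) = a * (a^m - b^m) + (a - b) * b^m := by
      rw [mul_sub, sub_mul, ← pow_succ', ← pow_succ']; abel
    have h1' : ‖a * (a^m - b^m)‖ ≤ ρ * (m * ‖a - b‖ * ρ^(m-1)) :=
      calc ‖a * (a^m - b^m)‖ ≤ ‖a‖ * ‖a^m - b^m‖ := norm_mul_le _ _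
        _ ≤ ρ * (m * ‖a - b‖ * ρ^(m-1)) :=
            mul_le_mul ha (pow_sub_pow_norm_le a b ρ ha hb h1 hρ m) (norm_nonneg _) h0
    have h2 : ‖(a - b) * b^m‖ ≤ ‖a - b‖ * ρ^m :=
      calc ‖(a - b) * b^m‖ ≤ ‖a - b‖ * ‖b^m‖ := norm_mul_le _ _
        _ ≤ ‖a - b‖ * ρ^m := mul_le_mul_of_nonneg_left (pow_norm_le_s9 b ρ hb h1 hρ m) (norm_nonneg _)
    calc ‖a^(m+1) - b^(m+1)‖ ≤ ‖a * (a^m - b^m)‖ + ‖(a - b) * b^m‖ := by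
          rw [key]; exact norm_add_le _ _
      _ ≤ ρ * (m * ‖a - b‖ * ρ^(m-1)) + ‖a - b‖ * ρ^m := add_le_add h1' h2
      _ = (m : ℝ) * ‖a - b‖ * ρ^m + ‖a - b‖ * ρ^m := by
          rw [show m - 1 = n from rfl, show (m:ℕ) = n+1 from rfl]
          push_cast; ring
      _ = ((m+1 : ℕ) : ℝ) * ‖a - b‖ * ρ^((m+1)-1) := by push_cast; ring


lemma matOpNorm_nonneg {d : ℕ} (A : Matrix (Fin d) (Fin d) ℝ) : 0 ≤ matOpNorm A :=
  norm_nonneg _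

lemma norm_mulVecE_le {d : ℕ} (A : Matrix (Fin d) (Fin d) ℝ) (v : EuclideanSpace ℝ (Fin d)) :
    ‖mulVecE A v‖ ≤ matOpNorm A * ‖v‖ :=
  ContinuousLinearMap.le_opNorm _ _

lemma coord_norm_le {d : ℕ} (v : EuclideanSpace ℝ (Fin d)) (i : Fin d) : |v i| ≤ ‖v‖ := by
  rw [EuclideanSpace.norm_eq]
  have h1 : |v i| = Real.sqrt (‖v i‖^2) := by
    rw [Real.sqrt_sq_eq_abs]; simp
  rw [h1]
  apply Real.sqrt_le_sqrt
  exact Finset.single_le_sum (f := fun j => ‖v j‖^2) (fun j _ => sq_nonneg _) (Finset.mem_univ i)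

lemma mulVecE_coord {d : ℕ} (A : Matrix (Fin d) (Fin d) ℝ) (v : EuclideanSpace ℝ (Fin d))
    (i : Fin d) : mulVecE A v i = A.mulVec v i := rfl

lemma abs_diag_le_matOpNorm {d : ℕ} (A : Matrix (Fin d) (Fin d) ℝ) (i : Fin d) :
    |A i i| ≤ matOpNorm A := by
  have he : ‖(EuclideanSpace.single i (1:ℝ) : EuclideanSpace ℝ (Fin d))‖ = 1 := by
    simp [EuclideanSpace.norm_single]
  have hco : mulVecE A (EuclideanSpace.single i (1:ℝ)) i = A i i := by
    rw [mulVecE_coord]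
    simp [Matrix.mulVec, dotProduct, EuclideanSpace.single_apply]
  calc |A i i| = |mulVecE A (EuclideanSpace.single i (1:ℝ)) i| := by rw [hco]
    _ ≤ ‖mulVecE A (EuclideanSpace.single i (1:ℝ))‖ := coord_norm_le _ i
    _ ≤ matOpNorm A * ‖(EuclideanSpace.single i (1:ℝ) : EuclideanSpace ℝ (Fin d))‖ :=
        norm_mulVecE_le _ _
    _ = matOpNorm A := by rw [he, mul_one]

lemma matOpNorm_diagonal_le_of {d : ℕ} (w : Fin d → ℝ) (C : ℝ) (hC : 0 ≤ C)
    (h : ∀ i, |w i| ≤ C) : matOpNorm (Matrix.diagonal w) ≤ C := by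
  apply ContinuousLinearMap.opNorm_le_bound _ hC
  intro v
  have hco : ∀ i, (mulVecE (Matrix.diagonal w) v) i = w i * v i := by
    intro i; rw [mulVecE_coord, Matrix.mulVec_diagonal]
  show ‖mulVecE (Matrix.diagonal w) v‖ ≤ C * ‖v‖
  rw [EuclideanSpace.norm_eq, EuclideanSpace.norm_eq]
  rw [← Real.sqrt_sq hC, ← Real.sqrt_mul (sq_nonneg C)]
  apply Real.sqrt_le_sqrt
  rw [Finset.mul_sum]
  apply Finset.sum_le_sum
  intro i _
  rw [hco]
  have : ‖w i * v i‖^2 = (w i)^2 * ‖v i‖^2 := by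
    rw [norm_mul]; rw [mul_pow]; congr 1; rw [Real.norm_eq_abs, sq_abs]
  rw [this]
  apply mul_le_mul_of_nonneg_right _ (sq_nonneg _)
  calc (w i)^2 = |w i|^2 := (sq_abs _).symm
    _ ≤ C^2 := pow_le_pow_left₀ (abs_nonneg _) (h i) 2


set_option maxHeartbeats 1000000 in
set_option synthInstance.maxHeartbeats 400000 in

lemma taylor_grad_bound {d : ℕ} (L : EuclideanSpace ℝ (Fin d) → ℝ)
    (U : Set (EuclideanSpace ℝ (Fin d))) (hU : IsOpen U) (M₃ : ℝ)
    (hL : ContDiffOn ℝ 3 L U) (hbound : ∀ x ∈ U, ‖iteratedFDeriv ℝ 3 L x‖ ≤ M₃)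
    (θ₀ : EuclideanSpace ℝ (Fin d)) (hstar : StarConvex ℝ θ₀ U) (hθ₀ : θ₀ ∈ U)
    (x : EuclideanSpace ℝ (Fin d)) (hx : x ∈ U) :
    ‖gradient L x - gradient L θ₀ - fderiv ℝ (gradient L) θ₀ (x - θ₀)‖ ≤
      M₃ / 2 * ‖x - θ₀‖^2 := by
  letI : NormedAddCommGroup (EuclideanSpace ℝ (Fin d) →L[ℝ] EuclideanSpace ℝ (Fin d) →L[ℝ] ℝ) := inferInstance
  letI : NormedSpace ℝ (EuclideanSpace ℝ (Fin d) →L[ℝ] EuclideanSpace ℝ (Fin d) →L[ℝ] ℝ) := inferInstance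
  set f₁ : EuclideanSpace ℝ (Fin d) → (EuclideanSpace ℝ (Fin d) →L[ℝ] ℝ) := fderiv ℝ L with hf₁def
  have hf₁ : ContDiffOn ℝ 2 f₁ U := hL.fderiv_of_isOpen (m := 2) hU (by norm_num)
  set f₂ : EuclideanSpace ℝ (Fin d) → (EuclideanSpace ℝ (Fin d) →L[ℝ] (EuclideanSpace ℝ (Fin d) →L[ℝ] ℝ)) := fderiv ℝ f₁ with hf₂def
  have hf₂ : ContDiffOn ℝ 1 f₂ U := hf₁.fderiv_of_isOpen (m := 1) hU (by norm_num)
  have hf₂d : ∀ z ∈ U, DifferentiableAt ℝ f₂ z := fun z hz =>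
    (hf₂.contDiffAt (hU.mem_nhds hz)).differentiableAt one_ne_zero
  have hf₁d : ∀ z ∈ U, DifferentiableAt ℝ f₁ z := fun z hz =>
    (hf₁.contDiffAt (hU.mem_nhds hz)).differentiableAt two_ne_zero
  have hf₂bd : ∀ z ∈ U, ‖fderiv ℝ f₂ z‖ ≤ M₃ := by
    intro z hz
    have e1 : ‖fderiv ℝ f₂ z‖ = ‖iteratedFDeriv ℝ 0 (fderiv ℝ f₂) z‖ := by
      rw [norm_iteratedFDeriv_zero]
    have e2 : ‖iteratedFDeriv ℝ 0 (fderiv ℝ f₂) z‖ = ‖iteratedFDeriv ℝ 1 f₂ z‖ :=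
      norm_iteratedFDeriv_fderiv
    have e3 : ‖iteratedFDeriv ℝ 1 f₂ z‖ = ‖iteratedFDeriv ℝ 2 f₁ z‖ :=
      norm_iteratedFDeriv_fderiv
    have e4 : ‖iteratedFDeriv ℝ 2 f₁ z‖ = ‖iteratedFDeriv ℝ 3 L z‖ :=
      norm_iteratedFDeriv_fderiv
    rw [e1, e2, e3, e4]; exact hbound z hz
  set v : EuclideanSpace ℝ (Fin d) := x - θ₀ with hv
  have hseg : ∀ t ∈ Icc (0:ℝ) 1, θ₀ + t • v ∈ U := by
    intro t ht
    have := hstar hx (by linarith [ht.2] : (0:ℝ) ≤ 1 - t) ht.1 (by ring)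
    convert this using 1
    rw [hv]; module
  -- Lipschitz bound for f₂ along the segment
  have hLip : ∀ t ∈ Icc (0:ℝ) 1, ‖f₂ (θ₀ + t • v) - f₂ θ₀‖ ≤ M₃ * (t * ‖v‖) := by
    intro t ht
    have hsub : segment ℝ θ₀ (θ₀ + t • v) ⊆ U := by
      rw [segment_eq_image']
      rintro z ⟨u, hu, rfl⟩
      show θ₀ + u • (θ₀ + t • v - θ₀) ∈ U
      have : θ₀ + u • (θ₀ + t • v - θ₀) = θ₀ + (u * t) • v := by
        rw [add_sub_cancel_left, smul_smul]
      rw [this]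
      exact hseg (u * t) ⟨mul_nonneg hu.1 ht.1,
        mul_le_one₀ hu.2 ht.1 ht.2⟩
    have := Convex.norm_image_sub_le_of_norm_fderiv_le
      (f := f₂) (C := M₃) (s := segment ℝ θ₀ (θ₀ + t • v))
      (fun z hz => hf₂d z (hsub hz)) (fun z hz => hf₂bd z (hsub hz))
      (convex_segment _ _) (left_mem_segment ℝ _ _) (right_mem_segment ℝ _ _)
    calc ‖f₂ (θ₀ + t • v) - f₂ θ₀‖ ≤ M₃ * ‖θ₀ + t • v - θ₀‖ := this
      _ = M₃ * (t * ‖v‖) := by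
          rw [add_sub_cancel_left, norm_smul, Real.norm_eq_abs, abs_of_nonneg ht.1]
  -- the function g and its derivative
  set g : ℝ → (EuclideanSpace ℝ (Fin d) →L[ℝ] ℝ) := fun t => f₁ (θ₀ + t • v) - t • (f₂ θ₀ v) with hg
  set g' : ℝ → (EuclideanSpace ℝ (Fin d) →L[ℝ] ℝ) := fun t => f₂ (θ₀ + t • v) v - f₂ θ₀ v with hg'
  have hderiv : ∀ t ∈ Icc (0:ℝ) 1, HasDerivAt g (g' t) t := by
    intro t ht
    have hpath : HasDerivAt (fun s : ℝ => θ₀ + s • v) v t := by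
      simpa using ((hasDerivAt_id t).smul_const v).const_add θ₀
    have hf : HasFDerivAt f₁ (f₂ (θ₀ + t • v)) (θ₀ + t • v) :=
      (hf₁d _ (hseg t ht)).hasFDerivAt
    have h1 : HasDerivAt (fun s : ℝ => f₁ (θ₀ + s • v)) (f₂ (θ₀ + t • v) v) t :=
      hf.comp_hasDerivAt t hpath
    have h2 : HasDerivAt (fun s : ℝ => s • (f₂ θ₀ v)) (f₂ θ₀ v) t := by
      simpa using (hasDerivAt_id t).smul_const (f₂ θ₀ v)
    exact h1.sub h2
  -- continuity of g' on [0,1]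
  have hg'cont : ContinuousOn g' (Icc (0:ℝ) 1) := by
    have hpath : Continuous (fun t : ℝ => θ₀ + t • v) :=
      continuous_const.add (continuous_id.smul continuous_const)
    have h1 : ContinuousOn (fun t : ℝ => f₂ (θ₀ + t • v)) (Icc (0:ℝ) 1) :=
      hf₂.continuousOn.comp hpath.continuousOn (fun t ht => hseg t ht)
    exact (h1.clm_apply continuousOn_const).sub continuousOn_const
  have hInt : IntervalIntegrable g' MeasureTheory.volume 0 1 :=
    (hg'cont.mono (by rw [uIcc_of_le (zero_le_one)])).intervalIntegrable
  have hFTC : ∫ t in (0:ℝ)..1, g' t = g 1 - g 0 :=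
    intervalIntegral.integral_eq_sub_of_hasDerivAt
      (fun t ht => hderiv t (by rwa [uIcc_of_le zero_le_one] at ht)) hInt
  have hbd : ‖∫ t in (0:ℝ)..1, g' t‖ ≤ M₃ / 2 * ‖v‖^2 := by
    have := intervalIntegral.norm_integral_le_of_norm_le
      (f := g') (g := fun t => M₃ * ‖v‖^2 * t) (μ := MeasureTheory.volume) (a := 0) (b := 1)
      zero_le_one ?_ ?_
    · refine this.trans (le_of_eq ?_)
      rw [intervalIntegral.integral_const_mul, integral_id]
      ring
    · filter_upwards with t ht
      have ht' : t ∈ Icc (0:ℝ) 1 := ⟨le_of_lt ht.1, ht.2⟩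
      calc ‖g' t‖ = ‖(f₂ (θ₀ + t • v) - f₂ θ₀) v‖ := by
            rw [hg']; simp
        _ ≤ ‖f₂ (θ₀ + t • v) - f₂ θ₀‖ * ‖v‖ := ContinuousLinearMap.le_opNorm _ _
        _ ≤ M₃ * (t * ‖v‖) * ‖v‖ :=
            mul_le_mul_of_nonneg_right (hLip t ht') (norm_nonneg _)
        _ = M₃ * ‖v‖^2 * t := by ring
    · exact (continuous_const.mul continuous_id).intervalIntegrable _ _
  have hkey : ‖f₁ x - f₁ θ₀ - f₂ θ₀ v‖ ≤ M₃ / 2 * ‖v‖^2 := by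
    have hg1 : g 1 = f₁ x - f₂ θ₀ v := by
      rw [hg]; simp [hv]
    have hg0 : g 0 = f₁ θ₀ := by rw [hg]; simp
    have : g 1 - g 0 = f₁ x - f₁ θ₀ - f₂ θ₀ v := by rw [hg1, hg0]; abel
    rw [← this, ← hFTC]; exact hbd
  -- transfer to gradient
  set ι := (InnerProductSpace.toDual ℝ (EuclideanSpace ℝ (Fin d))).symm with hι
  have hgradeq : ∀ y, gradient L y = ι (f₁ y) := fun y => rfl
  have hsmul : ∀ (c : ℝ) (p : StrongDual ℝ (EuclideanSpace ℝ (Fin d))),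
      ι (c • p) = c • ι p := by
    intro c p
    rw [LinearIsometryEquiv.map_smulₛₗ]
    norm_num
  set ι' : StrongDual ℝ (EuclideanSpace ℝ (Fin d)) ≃L[ℝ] EuclideanSpace ℝ (Fin d) :=
    { toFun := ι
      invFun := ι.symm
      map_add' := map_add ι
      map_smul' := fun c p => by simpa using hsmul c p
      left_inv := ι.symm_apply_apply
      right_inv := ι.apply_symm_apply
      continuous_toFun := ι.continuous
      continuous_invFun := ι.symm.continuous } with hι'
  have hT : ∀ w, fderiv ℝ (gradient L) θ₀ w = ι (f₂ θ₀ w) := by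
    intro w
    have hcomp : fderiv ℝ (gradient L) θ₀ =
        (ι' : StrongDual ℝ (EuclideanSpace ℝ (Fin d)) →L[ℝ]
          EuclideanSpace ℝ (Fin d)).comp (fderiv ℝ f₁ θ₀) := by
      have heq : gradient L = (ι' : StrongDual ℝ (EuclideanSpace ℝ (Fin d)) →
          EuclideanSpace ℝ (Fin d)) ∘ f₁ := rfl
      rw [heq, fderiv_comp θ₀ ι'.differentiableAt (hf₁d θ₀ hθ₀), ι'.fderiv]
    rw [hcomp]; rfl
  rw [hgradeq, hgradeq, hT]
  rw [← map_sub, ← map_sub]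
  rw [LinearIsometryEquiv.norm_map]
  exact hkey


lemma norm_one_CLM_le {d : ℕ} :
    ‖(1 : EuclideanSpace ℝ (Fin d) →L[ℝ] EuclideanSpace ℝ (Fin d))‖ ≤ 1 := by
  rw [ContinuousLinearMap.one_def]
  exact ContinuousLinearMap.norm_id_le


set_option maxHeartbeats 1600000 in
set_option synthInstance.maxHeartbeats 400000 in
/-- displacement-error bound for the diagonal surrogate. -/
theorem stmt9 {d : ℕ} (K : ℕ) (hK : 2 ≤ K) (η G M₃ : ℝ)
    (hη : 0 ≤ η) (hG : 0 ≤ G) (hM₃ : 0 ≤ M₃)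
    (L : EuclideanSpace ℝ (Fin d) → ℝ)
    (U : Set (EuclideanSpace ℝ (Fin d))) (hU : IsOpen U)
    (θ₀ : EuclideanSpace ℝ (Fin d)) (hstar : StarConvex ℝ θ₀ U)
    (hL : ContDiffOn ℝ 3 L U)
    (hbound : ∀ x ∈ U, ‖iteratedFDeriv ℝ 3 L x‖ ≤ M₃)
    (g₀ : EuclideanSpace ℝ (Fin d)) (hg₀ : g₀ = gradient L θ₀)
    (H₀ : Matrix (Fin d) (Fin d) ℝ)
    (hH₀ : ∀ v, mulVecE H₀ v = fderiv ℝ (gradient L) θ₀ v)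
    (ρ : ℝ) (hρ : ρ = max 1 (matOpNorm (1 - η • H₀)))
    (θtrue θquad : ℕ → EuclideanSpace ℝ (Fin d))
    (htrue0 : θtrue 0 = θ₀) (hquad0 : θquad 0 = θ₀)
    (htrue : ∀ n, θtrue (n + 1) = θtrue n - η • gradient L (θtrue n))
    (hquad : ∀ n, θquad (n + 1) = θquad n - η • mulVecE ((1 - η • H₀) ^ n) g₀)
    (hmemT : ∀ n ≤ K, θtrue n ∈ U) (hmemQ : ∀ n ≤ K, θquad n ∈ U)
    (hGbd : ∀ n < K, ‖gradient L (θtrue n)‖ ≤ G)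
    (θdiag : EuclideanSpace ℝ (Fin d))
    (hdiag : θdiag = θ₀ - η • ∑ n ∈ Finset.range K,
        mulVecE ((1 - η • Matrix.diagonal (fun i => H₀ i i)) ^ n) g₀) :
    ‖θdiag - θtrue K‖ ≤
      (K : ℝ) * ((K : ℝ) - 1) / 2 * η ^ 2 *
          matOpNorm (H₀ - Matrix.diagonal (fun i => H₀ i i)) * ‖g₀‖ * ρ ^ (K - 2)
        + (K : ℝ) * ((K : ℝ) - 1) * (2 * (K : ℝ) - 1) / 12 *
          η ^ 3 * M₃ * G ^ 2 * ρ ^ (K - 1) := by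
  have hθ₀U : θ₀ ∈ U := htrue0 ▸ hmemT 0 (by omega)
  set A : Matrix (Fin d) (Fin d) ℝ := 1 - η • H₀ with hA
  set Dm : Matrix (Fin d) (Fin d) ℝ := 1 - η • Matrix.diagonal (fun i => H₀ i i) with hDm
  set β : ℝ := matOpNorm (H₀ - Matrix.diagonal (fun i => H₀ i i)) with hβ
  have hβ0 : 0 ≤ β := matOpNorm_nonneg _
  have hρ1 : 1 ≤ ρ := hρ ▸ le_max_left _ _
  have hρ0 : 0 ≤ ρ := zero_le_one.trans hρ1
  have hρA : matOpNorm A ≤ ρ := hρ ▸ le_max_right _ _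
  have hDmdiag : Dm = Matrix.diagonal (fun i => A i i) := by
    ext i j
    by_cases hij : i = j
    · subst hij; simp [hDm, hA, Matrix.one_apply]
    · simp [hDm, hA, Matrix.one_apply, Matrix.diagonal_apply_ne _ hij, hij]
  have hρD : matOpNorm Dm ≤ ρ := by
    rw [hDmdiag]
    exact (matOpNorm_diagonal_le_of _ (matOpNorm A) (matOpNorm_nonneg A)
      (fun i => abs_diag_le_matOpNorm A i)).trans hρA
  -- CLM images
  have hφ : ∀ (M : Matrix (Fin d) (Fin d) ℝ) v, mulVecE M v =
      Matrix.toEuclideanCLM (𝕜 := ℝ) (n := Fin d) M v := fun _ _ => rfl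
  -- difference of powers bound
  have hABsub : matOpNorm (A - Dm) = η * β := by
    have h1 : A - Dm = -(η • (H₀ - Matrix.diagonal (fun i => H₀ i i))) := by
      rw [hA, hDm, smul_sub]; abel
    rw [h1]
    show ‖Matrix.toEuclideanCLM (𝕜 := ℝ) (n := Fin d) _‖ = _
    rw [map_neg, map_smul, norm_neg]
    rw [norm_smul η (Matrix.toEuclideanCLM (𝕜 := ℝ) (n := Fin d)
      (H₀ - Matrix.diagonal fun i => H₀ i i))]
    rw [Real.norm_eq_abs, abs_of_nonneg hη]
    rfl
  have hpowdiff : ∀ n : ℕ, matOpNorm (A ^ n - Dm ^ n) ≤ n * (η * β) * ρ ^ (n - 1) := by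
    intro n
    have := pow_sub_pow_norm_le (Matrix.toEuclideanCLM (𝕜 := ℝ) (n := Fin d) A)
      (Matrix.toEuclideanCLM (𝕜 := ℝ) (n := Fin d) Dm) ρ hρA hρD norm_one_CLM_le hρ1 n
    rw [← map_pow, ← map_pow, ← map_sub, ← map_sub] at this
    rw [← hABsub]
    exact this
  -- quad trajectory closed form
  have hquadSum : ∀ n, θquad n = θ₀ - η • ∑ m ∈ Finset.range n, mulVecE (A ^ m) g₀ := by
    intro n
    induction n with
    | zero => simp [hquad0]
    | succ m ih =>
        rw [hquad m, ih, Finset.sum_range_succ, smul_add]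
        abel
  -- Part A : ‖θdiag - θquad K‖
  have hPartA : ‖θdiag - θquad K‖ ≤
      (K : ℝ) * ((K : ℝ) - 1) / 2 * η ^ 2 * β * ‖g₀‖ * ρ ^ (K - 2) := by
    have hdq : θdiag - θquad K =
        η • ∑ n ∈ Finset.range K, (mulVecE (A ^ n) g₀ - mulVecE (Dm ^ n) g₀) := by
      rw [hdiag, hquadSum K, Finset.sum_sub_distrib, smul_sub]
      abel
    rw [hdq]
    have hterm : ∀ n ∈ Finset.range K,
        ‖mulVecE (A ^ n) g₀ - mulVecE (Dm ^ n) g₀‖ ≤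
          (n : ℝ) * ((η * β) * (ρ ^ (K - 2) * ‖g₀‖)) := by
      intro n hn
      rw [Finset.mem_range] at hn
      have h1 : mulVecE (A ^ n) g₀ - mulVecE (Dm ^ n) g₀ = mulVecE (A ^ n - Dm ^ n) g₀ := by
        rw [hφ, hφ, hφ, map_sub]; rfl
      rw [h1]
      calc ‖mulVecE (A ^ n - Dm ^ n) g₀‖ ≤ matOpNorm (A ^ n - Dm ^ n) * ‖g₀‖ :=
            norm_mulVecE_le _ _
        _ ≤ ((n : ℝ) * (η * β) * ρ ^ (n - 1)) * ‖g₀‖ :=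
            mul_le_mul_of_nonneg_right (hpowdiff n) (norm_nonneg _)
        _ ≤ (n : ℝ) * ((η * β) * (ρ ^ (K - 2) * ‖g₀‖)) := by
            have hpow : ρ ^ (n - 1) ≤ ρ ^ (K - 2) :=
              pow_le_pow_right₀ hρ1 (by omega)
            have := mul_le_mul_of_nonneg_right
              (mul_le_mul_of_nonneg_left hpow
                (by positivity : (0:ℝ) ≤ (n : ℝ) * (η * β))) (norm_nonneg g₀)
            calc ((n : ℝ) * (η * β) * ρ ^ (n - 1)) * ‖g₀‖
                ≤ ((n : ℝ) * (η * β) * ρ ^ (K - 2)) * ‖g₀‖ := this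
              _ = (n : ℝ) * ((η * β) * (ρ ^ (K - 2) * ‖g₀‖)) := by ring
    calc ‖η • ∑ n ∈ Finset.range K, (mulVecE (A ^ n) g₀ - mulVecE (Dm ^ n) g₀)‖
        = η * ‖∑ n ∈ Finset.range K, (mulVecE (A ^ n) g₀ - mulVecE (Dm ^ n) g₀)‖ := by
          rw [norm_smul, Real.norm_eq_abs, abs_of_nonneg hη]
      _ ≤ η * ∑ n ∈ Finset.range K, ‖mulVecE (A ^ n) g₀ - mulVecE (Dm ^ n) g₀‖ :=
          mul_le_mul_of_nonneg_left (norm_sum_le _ _) hη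
      _ ≤ η * ∑ n ∈ Finset.range K, (n : ℝ) * ((η * β) * (ρ ^ (K - 2) * ‖g₀‖)) :=
          mul_le_mul_of_nonneg_left (Finset.sum_le_sum hterm) hη
      _ = η * ((∑ n ∈ Finset.range K, (n : ℝ)) * ((η * β) * (ρ ^ (K - 2) * ‖g₀‖))) := by
          rw [← Finset.sum_mul]
      _ = (K : ℝ) * ((K : ℝ) - 1) / 2 * η ^ 2 * β * ‖g₀‖ * ρ ^ (K - 2) := by
          rw [sum_range_id_real]; ring
  -- Taylor remainder control
  set Tlin : EuclideanSpace ℝ (Fin d) →L[ℝ] EuclideanSpace ℝ (Fin d) :=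
    Matrix.toEuclideanCLM (𝕜 := ℝ) (n := Fin d) H₀ with hTlin
  have hTfd : ∀ w, Tlin w = fderiv ℝ (gradient L) θ₀ w := hH₀
  have hr : ∀ x ∈ U, ‖gradient L x - g₀ - Tlin (x - θ₀)‖ ≤ M₃ / 2 * ‖x - θ₀‖ ^ 2 := by
    intro x hx
    rw [hg₀, hTfd]
    exact taylor_grad_bound L U hU M₃ hL hbound θ₀ hstar hθ₀U x hx
  have htrueDist : ∀ n ≤ K, ‖θtrue n - θ₀‖ ≤ η * n * G := by
    intro n hn
    induction n with
    | zero => simp [htrue0]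
    | succ m ih =>
        have hm : m ≤ K := by omega
        calc ‖θtrue (m + 1) - θ₀‖ = ‖(θtrue m - θ₀) - η • gradient L (θtrue m)‖ := by
              rw [htrue m]; congr 1; abel
          _ ≤ ‖θtrue m - θ₀‖ + ‖η • gradient L (θtrue m)‖ := norm_sub_le _ _
          _ ≤ η * m * G + η * G := by
              apply add_le_add (ih hm)
              rw [norm_smul, Real.norm_eq_abs, abs_of_nonneg hη]
              exact mul_le_mul_of_nonneg_left (hGbd m (by omega)) hη
          _ = η * (m + 1 : ℕ) * G := by push_cast; ring
  -- geometric identity: action of A^n on g₀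
  have hAct : ∀ n, mulVecE (A ^ n) g₀ = g₀ + Tlin (θquad n - θ₀) := by
    intro n
    have hgeom : A ^ n = 1 - (η • H₀) * (∑ m ∈ Finset.range n, A ^ m) := by
      have h1 : (A - 1) * (∑ m ∈ Finset.range n, A ^ m) = A ^ n - 1 :=
        mul_geom_sum A n
      have h2 : A - 1 = -(η • H₀) := by rw [hA]; abel
      rw [h2] at h1
      have := h1
      rw [neg_mul] at this
      linear_combination (norm := (abel)) -this
    rw [hgeom]
    have : mulVecE (1 - (η • H₀) * (∑ m ∈ Finset.range n, A ^ m)) g₀ =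
        g₀ - η • Tlin (∑ m ∈ Finset.range n, mulVecE (A ^ m) g₀) := by
      rw [hφ, map_sub, map_one, map_mul, map_smul]
      simp only [ContinuousLinearMap.sub_apply, ContinuousLinearMap.one_apply,
        ContinuousLinearMap.smul_apply, ContinuousLinearMap.mul_apply, map_sum]
      rw [ContinuousLinearMap.sum_apply, map_sum]
      rfl
    rw [this, hquadSum n]
    rw [show θ₀ - η • ∑ m ∈ Finset.range n, mulVecE (A ^ m) g₀ - θ₀ =
        -(η • ∑ m ∈ Finset.range n, mulVecE (A ^ m) g₀) by abel]
    rw [map_neg, map_smul]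
    abel
  -- error recursion
  have herec : ∀ n, θquad (n + 1) - θtrue (n + 1) =
      mulVecE A (θquad n - θtrue n)
        + η • (gradient L (θtrue n) - g₀ - Tlin (θtrue n - θ₀)) := by
    intro n
    rw [hquad n, htrue n, hAct n]
    have hAapp : ∀ w, mulVecE A w = w - η • Tlin w := by
      intro w
      rw [hφ, hA, map_sub, map_one, map_smul]
      rfl
    rw [hAapp]
    simp only [map_sub]
    module
  set C : ℝ := η ^ 3 * M₃ * G ^ 2 / 2 with hC
  have hC0 : 0 ≤ C := by positivity
  have hEbd : ∀ n ≤ K, ‖θquad n - θtrue n‖ ≤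
      C * ρ ^ (n - 1) * ∑ m ∈ Finset.range n, (m : ℝ) ^ 2 := by
    intro n hn
    induction n with
    | zero => simp [hquad0, htrue0]
    | succ m ih =>
        have hm : m ≤ K := by omega
        have hmK : m < K := by omega
        have hrm : ‖gradient L (θtrue m) - g₀ - Tlin (θtrue m - θ₀)‖ ≤
            M₃ / 2 * (η * m * G) ^ 2 := by
          refine (hr (θtrue m) (hmemT m hm)).trans ?_
          apply mul_le_mul_of_nonneg_left _ (by positivity)
          exact pow_le_pow_left₀ (norm_nonneg _) (htrueDist m hm) 2
        have step : ‖θquad (m + 1) - θtrue (m + 1)‖ ≤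
            ρ * ‖θquad m - θtrue m‖ + C * (m : ℝ) ^ 2 := by
          rw [herec m]
          calc ‖mulVecE A (θquad m - θtrue m)
                + η • (gradient L (θtrue m) - g₀ - Tlin (θtrue m - θ₀))‖
              ≤ ‖mulVecE A (θquad m - θtrue m)‖
                + ‖η • (gradient L (θtrue m) - g₀ - Tlin (θtrue m - θ₀))‖ := norm_add_le _ _
            _ ≤ ρ * ‖θquad m - θtrue m‖ + C * (m : ℝ) ^ 2 := by
                apply add_le_add
                · exact (norm_mulVecE_le _ _).trans
                    (mul_le_mul_of_nonneg_right hρA (norm_nonneg _))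
                · rw [norm_smul, Real.norm_eq_abs, abs_of_nonneg hη]
                  refine (mul_le_mul_of_nonneg_left hrm hη).trans (le_of_eq ?_)
                  rw [hC]; ring
        rcases Nat.eq_zero_or_pos m with hm0 | hmpos
        · subst hm0
          have h0 : θquad 0 - θtrue 0 = 0 := by rw [hquad0, htrue0, sub_self]
          rw [h0] at step
          simpa using step
        · have ih' := ih hm
          have hsum0 : (0:ℝ) ≤ ∑ j ∈ Finset.range m, (j : ℝ) ^ 2 :=
            Finset.sum_nonneg fun j _ => sq_nonneg _
          calc ‖θquad (m + 1) - θtrue (m + 1)‖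
              ≤ ρ * ‖θquad m - θtrue m‖ + C * (m : ℝ) ^ 2 := step
            _ ≤ ρ * (C * ρ ^ (m - 1) * ∑ j ∈ Finset.range m, (j : ℝ) ^ 2)
                + C * (m : ℝ) ^ 2 := by
                apply add_le_add_left (mul_le_mul_of_nonneg_left ih' hρ0)
            _ ≤ C * ρ ^ m * (∑ j ∈ Finset.range m, (j : ℝ) ^ 2)
                + C * ρ ^ m * (m : ℝ) ^ 2 := by
                apply add_le_add
                · rw [show ρ * (C * ρ ^ (m - 1) * ∑ j ∈ Finset.range m, (j : ℝ) ^ 2)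
                      = C * (ρ * ρ ^ (m - 1)) * ∑ j ∈ Finset.range m, (j : ℝ) ^ 2 by ring]
                  apply mul_le_mul_of_nonneg_right _ hsum0
                  apply mul_le_mul_of_nonneg_left _ hC0
                  rw [← pow_succ']
                  exact pow_le_pow_right₀ hρ1 (by omega)
                · rw [mul_assoc]
                  apply mul_le_mul_of_nonneg_left _ hC0
                  rw [show (m:ℝ)^2 = 1 * (m:ℝ)^2 by ring, ← mul_assoc]
                  apply mul_le_mul_of_nonneg_right _ (sq_nonneg _)
                  rw [mul_one]
                  exact one_le_pow₀ hρ1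
            _ = C * ρ ^ ((m+1) - 1) * ∑ j ∈ Finset.range (m+1), (j : ℝ) ^ 2 := by
                rw [Finset.sum_range_succ, Nat.add_sub_cancel]; ring
  -- combine
  have hPartB : ‖θquad K - θtrue K‖ ≤
      (K : ℝ) * ((K : ℝ) - 1) * (2 * (K : ℝ) - 1) / 12 * η ^ 3 * M₃ * G ^ 2 * ρ ^ (K - 1) := by
    refine (hEbd K le_rfl).trans (le_of_eq ?_)
    rw [sum_range_sq_real, hC]; ring
  calc ‖θdiag - θtrue K‖ = ‖(θdiag - θquad K) + (θquad K - θtrue K)‖ := by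
        congr 1; abel
    _ ≤ ‖θdiag - θquad K‖ + ‖θquad K - θtrue K‖ := norm_add_le _ _
    _ ≤ _ := add_le_add hPartA hPartB
end

section
/- Let H₀ be a real d×d matrix, g₀, θ₀ ∈ ℝ^d, η ≥ 0, δ > 0, K ≥ 1, R ≥ 0, and g₁ = g₀ − η·H₀·g₀. Let 𝒜 = {i : |g₀_i| > δ} and 𝒮 its complement; for i ∈ 𝒜 set r_i = g₁_i/g₀_i, and for all i set r̄_i = 1 − η·H₀_{ii}. Assume |r_i| ≤ R for all i ∈ 𝒜 and |r̄_i| ≤ R for all i. Set C_{K,R} = ∑_{n=1}^{K−1} n·R^{n−1} and D_{K,R} = 2 + ∑_{n=0}^{K−1} R^n. Define θ_K^{emp} coordinate-wise by θ_{0,i} − η·g₀_i·S_K(r_i) for i ∈ 𝒜 and θ_{0,i} − η·(g₀_i + g₁_i) for i ∈ 𝒮, and define θ_K^{diag} coordinate-wise by θ_{0,i} − η·g₀_i·S_K(r̄_i) for all i. Then ‖θ_K^{emp} − θ_K^{diag}‖ ≤ η²·C_{K,R}·(‖H₀^off‖_∞/δ)·‖g₀‖_∞·‖g₀ restricted to 𝒜‖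 + η·D_{K,R}·∑_{i ∈ 𝒮} |g₀_i| + η²·∑_{i ∈ 𝒮} |(H₀·g₀)_i|. -/
/-- Geometric sum `S_K(x) = ∑_{n=0}^{K-1} x^n`. -/
noncomputable def SK (K : ℕ) (x : ℝ) : ℝ := ∑ n ∈ Finset.range K, x ^ n

/-- Maximum absolute coordinate of a vector (sup norm), for `0 < d`. -/
noncomputable def vecSupNorm {d : ℕ} (hd : 0 < d) (v : Fin d → ℝ) : ℝ :=
  Finset.univ.sup' (Finset.univ_nonempty_iff.mpr ⟨⟨0, hd⟩⟩) fun j => |v j|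

/-- Maximum off-diagonal absolute row sum `max_i ∑_{j ≠ i} |A i j|`, for `0 < d`. -/
noncomputable def offRowSum {d : ℕ} (hd : 0 < d) (A : Matrix (Fin d) (Fin d) ℝ) : ℝ :=
  Finset.univ.sup' (Finset.univ_nonempty_iff.mpr ⟨⟨0, hd⟩⟩) fun i =>
    ∑ j ∈ Finset.univ.erase i, |A i j|

/-- Reinterpret a plain vector as an element of Euclidean space. -/
noncomputable def toE {d : ℕ} (f : Fin d → ℝ) : EuclideanSpace ℝ (Fin d) :=
  (WithLp.equiv 2 (∀ _ : Fin d, ℝ)).symm f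

lemma my_abs_pow_sub_pow {x y R : ℝ} (hx : |x| ≤ R) (hy : |y| ≤ R) :
    ∀ n : ℕ, |x ^ n - y ^ n| ≤ n * R ^ (n - 1) * |x - y|
  | 0 => by simp
  | (n+1) => by
    have hR0 : 0 ≤ R := (abs_nonneg x).trans hx
    have ih := my_abs_pow_sub_pow hx hy n
    have key : x ^ (n+1) - y ^ (n+1) = x * (x ^ n - y ^ n) + (x - y) * y ^ n := by ring
    have h1 : |x ^ (n+1) - y ^ (n+1)| ≤ R * (n * R ^ (n-1) * |x - y|) + |x - y| * R ^ n := by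
      rw [key]
      calc |x * (x ^ n - y ^ n) + (x - y) * y ^ n|
          ≤ |x * (x ^ n - y ^ n)| + |(x - y) * y ^ n| := abs_add_le _ _
        _ = |x| * |x ^ n - y ^ n| + |x - y| * |y| ^ n := by
            rw [abs_mul, abs_mul, abs_pow]
        _ ≤ R * (n * R ^ (n-1) * |x - y|) + |x - y| * R ^ n := by
            gcongr
    refine h1.trans ?_
    have hcast : ((n + 1 : ℕ) : ℝ) = (n : ℝ) + 1 := by push_cast; ring
    rw [show (n + 1) - 1 = n from rfl, hcast]
    rcases Nat.eq_zero_or_pos n with h0 | hpos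
    · subst h0; simp
    · have hpow : R * R ^ (n - 1) = R ^ n := by
        rw [← pow_succ']
        congr 1
        omega
      have heq : R * ((n : ℝ) * R ^ (n-1) * |x - y|) + |x - y| * R ^ n
          = ((n : ℝ) + 1) * R ^ n * |x - y| := by rw [← hpow]; ring
      linarith

lemma my_SK_sub (K : ℕ) {x y R : ℝ} (hx : |x| ≤ R) (hy : |y| ≤ R) :
    |SK K x - SK K y| ≤ (∑ n ∈ Finset.range K, (n : ℝ) * R ^ (n - 1)) * |x - y| := by
  unfold SK
  rw [← Finset.sum_sub_distrib, Finset.sum_mul]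
  refine (Finset.abs_sum_le_sum_abs _ _).trans (Finset.sum_le_sum fun n _ => ?_)
  exact my_abs_pow_sub_pow hx hy n

lemma my_range_Icc (K : ℕ) (hK : 1 ≤ K) (R : ℝ) :
    ∑ n ∈ Finset.range K, (n : ℝ) * R ^ (n - 1)
      = ∑ n ∈ Finset.Icc 1 (K - 1), (n : ℝ) * R ^ (n - 1) := by
  refine (Finset.sum_subset ?_ ?_).symm
  · intro n hn
    simp only [Finset.mem_Icc] at hn
    exact Finset.mem_range.mpr (by omega)
  · intro n hn hn'
    simp only [Finset.mem_range] at hn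
    simp only [Finset.mem_Icc] at hn'
    have : n = 0 := by omega
    simp [this]

lemma my_SK_bound (K : ℕ) {y R : ℝ} (hy : |y| ≤ R) :
    |SK K y| ≤ ∑ n ∈ Finset.range K, R ^ n := by
  unfold SK
  refine (Finset.abs_sum_le_sum_abs _ _).trans (Finset.sum_le_sum fun n _ => ?_)
  rw [abs_pow]
  exact pow_le_pow_left₀ (abs_nonneg _) hy n

lemma toE_apply {d : ℕ} (f : Fin d → ℝ) (i : Fin d) : (toE f) i = f i := rfl

lemma my_norm_le_of_abs_le {d : ℕ} (v w : Fin d → ℝ) (c : ℝ) (hc : 0 ≤ c)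
    (h : ∀ i, |v i| ≤ c * |w i|) : ‖toE v‖ ≤ c * ‖toE w‖ := by
  rw [EuclideanSpace.norm_eq, EuclideanSpace.norm_eq]
  have h1 : ∑ i, ‖(toE v) i‖ ^ 2 ≤ c ^ 2 * ∑ i, ‖(toE w) i‖ ^ 2 := by
    rw [Finset.mul_sum]
    refine Finset.sum_le_sum fun i _ => ?_
    rw [toE_apply, toE_apply, Real.norm_eq_abs, Real.norm_eq_abs, ← mul_pow]
    exact pow_le_pow_left₀ (abs_nonneg _) (h i) 2
  calc Real.sqrt (∑ i, ‖(toE v) i‖ ^ 2)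
      ≤ Real.sqrt (c ^ 2 * ∑ i, ‖(toE w) i‖ ^ 2) := Real.sqrt_le_sqrt h1
    _ = c * Real.sqrt (∑ i, ‖(toE w) i‖ ^ 2) := by
        rw [Real.sqrt_mul (sq_nonneg c), Real.sqrt_sq hc]

lemma my_norm_le_sum {d : ℕ} (v : Fin d → ℝ) : ‖toE v‖ ≤ ∑ i, |v i| := by
  rw [EuclideanSpace.norm_eq]
  have h1 : ∑ i, ‖(toE v) i‖ ^ 2 ≤ (∑ i, |v i|) ^ 2 := by
    have := Finset.sum_sq_le_sq_sum_of_nonneg (s := Finset.univ)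
      (f := fun i => |v i|) (fun i _ => abs_nonneg _)
    simpa [toE_apply] using this
  refine (Real.sqrt_le_sqrt h1).trans ?_
  rw [Real.sqrt_sq (Finset.sum_nonneg fun i _ => abs_nonneg _)]

/-- additional displacement error from active-set empirical ratios. -/
theorem stmt12 {d : ℕ} (hd : 0 < d) (H₀ : Matrix (Fin d) (Fin d) ℝ)
    (g₀ θ₀ : EuclideanSpace ℝ (Fin d)) (η δ R : ℝ)
    (hη : 0 ≤ η) (hδ : 0 < δ) (hR : 0 ≤ R) (K : ℕ) (hK : 1 ≤ K)
    (g₁ : EuclideanSpace ℝ (Fin d))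
    (hg₁ : ∀ i, g₁ i = g₀ i - η * H₀.mulVec (fun j => g₀ j) i)
    (r rbar : Fin d → ℝ)
    (hr : ∀ i, δ < |g₀ i| → r i = g₁ i / g₀ i)
    (hrbar : ∀ i, rbar i = 1 - η * H₀ i i)
    (hrR : ∀ i, δ < |g₀ i| → |r i| ≤ R)
    (hrbarR : ∀ i, |rbar i| ≤ R)
    (CKR DKR : ℝ)
    (hC : CKR = ∑ n ∈ Finset.Icc 1 (K - 1), (n : ℝ) * R ^ (n - 1))
    (hDk : DKR = 2 + ∑ n ∈ Finset.range K, R ^ n)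
    (θemp θdiag : EuclideanSpace ℝ (Fin d))
    (hemp : ∀ i, θemp i =
      if δ < |g₀ i| then θ₀ i - η * g₀ i * SK K (r i)
      else θ₀ i - η * (g₀ i + g₁ i))
    (hdia : ∀ i, θdiag i = θ₀ i - η * g₀ i * SK K (rbar i)) :
    ‖θemp - θdiag‖ ≤
      η ^ 2 * CKR * (offRowSum hd H₀ / δ) * vecSupNorm hd (fun j => g₀ j) *
          ‖toE (fun i => if δ < |g₀ i| then g₀ i else 0)‖
        + η * DKR * ∑ i ∈ Finset.univ.filter (fun i => ¬ δ < |g₀ i|), |g₀ i|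
        + η ^ 2 * ∑ i ∈ Finset.univ.filter (fun i => ¬ δ < |g₀ i|),
            |H₀.mulVec (fun j => g₀ j) i| := by
  classical
  set Hg : Fin d → ℝ := fun i => H₀.mulVec (fun j => g₀ j) i with hHgdef
  have hHgi : ∀ i, H₀.mulVec (fun j => g₀ j) i = Hg i := fun i => rfl
  set sup : ℝ := vecSupNorm hd (fun j => g₀ j) with hsupdef
  set off : ℝ := offRowSum hd H₀ with hoffdef
  set c : ℝ := η ^ 2 * CKR * (off / δ) * sup with hcdef
  -- nonnegativity facts
  have hC0 : 0 ≤ CKR := by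
    rw [hC]; exact Finset.sum_nonneg fun n _ => by positivity
  have i0 : Fin d := ⟨0, hd⟩
  have hsup0 : 0 ≤ sup :=
    (abs_nonneg (g₀ i0)).trans (Finset.le_sup' (fun j => |g₀ j|) (Finset.mem_univ i0))
  have hsup_le : ∀ j, |g₀ j| ≤ sup :=
    fun j => Finset.le_sup' (fun j => |g₀ j|) (Finset.mem_univ j)
  have hoff0 : 0 ≤ off :=
    (Finset.sum_nonneg fun j _ => abs_nonneg (H₀ i0 j)).trans
      (Finset.le_sup' (f := fun i => ∑ j ∈ Finset.univ.erase i, |H₀ i j|)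
        (Finset.mem_univ i0))
  have hoff_le : ∀ i, ∑ j ∈ Finset.univ.erase i, |H₀ i j| ≤ off :=
    fun i => Finset.le_sup' (f := fun i => ∑ j ∈ Finset.univ.erase i, |H₀ i j|)
      (Finset.mem_univ i)
  have hc0 : 0 ≤ c := by
    have := div_nonneg hoff0 hδ.le
    have h2 : 0 ≤ η ^ 2 := sq_nonneg η
    exact mul_nonneg (mul_nonneg (mul_nonneg h2 hC0) this) hsup0
  -- active-set coordinate bound
  have hA : ∀ i, δ < |g₀ i| → |θemp i - θdiag i| ≤ c * |g₀ i| := by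
    intro i hi
    have hne : g₀ i ≠ 0 := by
      intro h; rw [h] at hi; simp at hi; linarith
    -- difference of ratios
    have hrd : r i - rbar i = -(η * (∑ j ∈ Finset.univ.erase i, H₀ i j * g₀ j)) / g₀ i := by
      have hsum : Hg i = (∑ j ∈ Finset.univ.erase i, H₀ i j * g₀ j) + H₀ i i * g₀ i := by
        rw [hHgdef]
        simp only [Matrix.mulVec, dotProduct]
        exact (Finset.sum_erase_add _ _ (Finset.mem_univ i)).symm
      rw [hr i hi, hrbar i, hg₁ i, hHgi i, hsum]
      field_simp
      ring
    have hrd_abs : |r i - rbar i| ≤ η * (off / δ) * sup := by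
      rw [hrd, abs_div, abs_neg, abs_mul, abs_of_nonneg hη]
      have hnum : |∑ j ∈ Finset.univ.erase i, H₀ i j * g₀ j| ≤ off * sup := by
        refine (Finset.abs_sum_le_sum_abs _ _).trans ?_
        calc ∑ j ∈ Finset.univ.erase i, |H₀ i j * g₀ j|
            ≤ ∑ j ∈ Finset.univ.erase i, |H₀ i j| * sup := by
              refine Finset.sum_le_sum fun j _ => ?_
              rw [abs_mul]
              exact mul_le_mul_of_nonneg_left (hsup_le j) (abs_nonneg _)
          _ = (∑ j ∈ Finset.univ.erase i, |H₀ i j|) * sup := by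
              rw [Finset.sum_mul]
          _ ≤ off * sup := mul_le_mul_of_nonneg_right (hoff_le i) hsup0
      have hden : δ ≤ |g₀ i| := hi.le
      calc η * |∑ j ∈ Finset.univ.erase i, H₀ i j * g₀ j| / |g₀ i|
          ≤ η * (off * sup) / δ :=
            div_le_div₀ (mul_nonneg hη (mul_nonneg hoff0 hsup0))
              (mul_le_mul_of_nonneg_left hnum hη) hδ hden
        _ = η * (off / δ) * sup := by ring
    have hSK : |SK K (r i) - SK K (rbar i)| ≤ CKR * |r i - rbar i| := by
      rw [hC, ← my_range_Icc K hK R]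
      exact my_SK_sub K (hrR i hi) (hrbarR i)
    have hdiff : θemp i - θdiag i = -(η * g₀ i) * (SK K (r i) - SK K (rbar i)) := by
      rw [hemp i, hdia i, if_pos hi]; ring
    rw [hdiff, abs_mul, abs_neg, abs_mul, abs_of_nonneg hη]
    calc η * |g₀ i| * |SK K (r i) - SK K (rbar i)|
        ≤ η * |g₀ i| * (CKR * (η * (off / δ) * sup)) :=
          mul_le_mul_of_nonneg_left
            (hSK.trans (mul_le_mul_of_nonneg_left hrd_abs hC0))
            (mul_nonneg hη (abs_nonneg _))
      _ = c * |g₀ i| := by rw [hcdef]; ring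
  -- inactive-set coordinate bound
  have hS : ∀ i, ¬ δ < |g₀ i| →
      |θemp i - θdiag i| ≤ η * DKR * |g₀ i| + η ^ 2 * |Hg i| := by
    intro i hi
    have hdiff : θemp i - θdiag i
        = η * (g₀ i * (SK K (rbar i) - 2)) + η ^ 2 * Hg i := by
      rw [hemp i, hdia i, if_neg hi, hg₁ i, hHgi i]; ring
    refine (hdiff ▸ abs_add_le _ _).trans ?_
    have h1 : |η * (g₀ i * (SK K (rbar i) - 2))| ≤ η * DKR * |g₀ i| := by
      rw [abs_mul, abs_of_nonneg hη, abs_mul]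
      have : |SK K (rbar i) - 2| ≤ DKR := by
        rw [hDk]
        refine (abs_sub _ _).trans ?_
        have := my_SK_bound K (hrbarR i)
        simp only [abs_two]
        linarith
      calc η * (|g₀ i| * |SK K (rbar i) - 2|) ≤ η * (|g₀ i| * DKR) := by
            gcongr
        _ = η * DKR * |g₀ i| := by ring
    have h2 : |η ^ 2 * Hg i| ≤ η ^ 2 * |Hg i| := by
      rw [abs_mul, abs_of_nonneg (sq_nonneg η)]
    linarith
  -- split the vector
  set vA : Fin d → ℝ := fun i => if δ < |g₀ i| then θemp i - θdiag i else 0 with hvA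
  set vS : Fin d → ℝ := fun i => if δ < |g₀ i| then 0 else θemp i - θdiag i with hvS
  have hsplit : θemp - θdiag = toE vA + toE vS := by
    ext i
    show θemp i - θdiag i = vA i + vS i
    by_cases h : δ < |g₀ i| <;> simp [hvA, hvS, h]
  have hnA : ‖toE vA‖ ≤ c * ‖toE (fun i => if δ < |g₀ i| then g₀ i else 0)‖ := by
    refine my_norm_le_of_abs_le _ _ c hc0 fun i => ?_
    by_cases h : δ < |g₀ i|
    · simp only [hvA, if_pos h]
      exact hA i h
    · simp [hvA, if_neg h, h]
  have hnS : ‖toE vS‖ ≤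
      η * DKR * (∑ i ∈ Finset.univ.filter (fun i => ¬ δ < |g₀ i|), |g₀ i|)
        + η ^ 2 * (∑ i ∈ Finset.univ.filter (fun i => ¬ δ < |g₀ i|), |Hg i|) := by
    refine (my_norm_le_sum vS).trans ?_
    have heq : ∑ i, |vS i|
        = ∑ i ∈ Finset.univ.filter (fun i => ¬ δ < |g₀ i|), |θemp i - θdiag i| := by
      rw [Finset.sum_filter]
      refine Finset.sum_congr rfl fun i _ => ?_
      by_cases h : δ < |g₀ i| <;> simp [hvS, h]
    rw [heq, Finset.mul_sum, Finset.mul_sum, ← Finset.sum_add_distrib]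
    refine Finset.sum_le_sum fun i hi => ?_
    have hi' : ¬ δ < |g₀ i| := (Finset.mem_filter.mp hi).2
    exact hS i hi'
  calc ‖θemp - θdiag‖ = ‖toE vA + toE vS‖ := by rw [hsplit]
    _ ≤ ‖toE vA‖ + ‖toE vS‖ := norm_add_le _ _
    _ ≤ c * ‖toE (fun i => if δ < |g₀ i| then g₀ i else 0)‖
          + (η * DKR * (∑ i ∈ Finset.univ.filter (fun i => ¬ δ < |g₀ i|), |g₀ i|)
            + η ^ 2 * (∑ i ∈ Finset.univ.filter (fun i => ¬ δ < |g₀ i|), |Hg i|)) := by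
        exact add_le_add hnA hnS
    _ = _ := by rw [hcdef]; ring
end

section
/- Let h ∈ ℝ^d with h_i > 0 and η > 0 with η·h_i ≤ 1 for all i, let H₀ = diag(h), and let L(θ) = (1/2)·θᵀH₀θ. Define the gradient-descent iterates θ_{n+1}^{GD} = θ_n^{GD} − η·H₀·θ_n^{GD} from θ₀, set r_i = 1 − η·h_i, and let θ₂ = θ₂^{GD} be the second GD iterate. Define the extrapolated point θ_K^{GXPO} coordinate-wise by θ_{0,i} + (θ_{2,i} − θ_{0,i})·S_K(r_i)/S_2(r_i) for K ≥ 1, and the corrected point θ_{new} = θ_K^{GXPO} − η·∇L(θ_K^{GXPO}). Then θ_K^{GXPO} = θ_K^{GD} and θ_{new} = θ_{K+1}^{GD}. -/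
/-- exactness of GXPO extrapolation on diagonal quadratics.
For the quadratic loss `L θ = (1/2) θᵀ H₀ θ` with `H₀ = diag h`, the gradient is
`∇L θ = H₀.mulVec θ`. -/
theorem stmt14 {d : ℕ} (h : Fin d → ℝ) (hh : ∀ i, 0 < h i)
    (η : ℝ) (hη : 0 < η) (hηh : ∀ i, η * h i ≤ 1)
    (θ₀ : Fin d → ℝ) (θGD : ℕ → Fin d → ℝ)
    (hθ0 : θGD 0 = θ₀)
    (hθ : ∀ n, θGD (n + 1) = θGD n - η • (Matrix.diagonal h).mulVec (θGD n))
    (r : Fin d → ℝ) (hrdef : ∀ i, r i = 1 - η * h i)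
    (K : ℕ) (hK : 1 ≤ K)
    (θK : Fin d → ℝ)
    (hθK : ∀ i, θK i = θ₀ i + (θGD 2 i - θ₀ i) * (SK K (r i) / SK 2 (r i)))
    (θnew : Fin d → ℝ)
    (hθnew : θnew = θK - η • (Matrix.diagonal h).mulVec θK) :
    θK = θGD K ∧ θnew = θGD (K + 1) := by
  have hpow : ∀ n i, θGD n i = (r i) ^ n * θ₀ i := by
    intro n
    induction n with
    | zero => intro i; simp [hθ0]
    | succ n ih =>
      intro i
      rw [hθ, Pi.sub_apply, Pi.smul_apply, Matrix.mulVec_diagonal, ih i, hrdef i,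
        smul_eq_mul]
      ring
  have hr0 : ∀ i, 0 ≤ r i := fun i => by rw [hrdef i]; linarith [hηh i]
  have hS2 : ∀ i, SK 2 (r i) = 1 + r i := by
    intro i; simp [SK, Finset.sum_range_succ]
  have hgeom : ∀ i, (r i - 1) * SK K (r i) = (r i) ^ K - 1 := by
    intro i
    have := geom_sum_mul (r i) K
    rw [SK]; linarith [this]
  have hKeq : ∀ i, θK i = (r i) ^ K * θ₀ i := by
    intro i
    have hne : (1 : ℝ) + r i ≠ 0 := by have := hr0 i; linarith
    rw [hθK i, hpow 2 i, hS2 i]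
    have key : (θ₀ i * (r i) ^ 2 - θ₀ i) * SK K (r i)
        = ((r i) ^ K * θ₀ i - θ₀ i) * (1 + r i) :=
      calc (θ₀ i * (r i) ^ 2 - θ₀ i) * SK K (r i)
          = θ₀ i * (1 + r i) * ((r i - 1) * SK K (r i)) := by ring
        _ = θ₀ i * (1 + r i) * ((r i) ^ K - 1) := by rw [hgeom i]
        _ = ((r i) ^ K * θ₀ i - θ₀ i) * (1 + r i) := by ring
    field_simp
    linear_combination key
  constructor
  · funext i; rw [hKeq i, hpow K i]
  · funext i
    rw [hθnew, hθ K, Pi.sub_apply, Pi.sub_apply, Pi.smul_apply, Pi.smul_apply,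
      Matrix.mulVec_diagonal, Matrix.mulVec_diagonal, hKeq i, hpow K i]
end
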